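/- Let n ≥ 1, z ∈ ℂ∖ℝ, and let π₁, …, π_k be Hermitian projections of ℂⁿ. For 1 ≤ j ≤ k set P_{k,j} = Σ_{k ≥ i₁ > i₂ > ⋯ > i_j ≥ 1} π_{i₁}^⊥ · π_{i₂}^⊥ ⋯ π_{i_j}^⊥ (the sum over all strictly decreasing j-tuples of indices in {1,…,k}). Then for every λ ∈ ℂ∖{z}: g_{z,π_k}(λ)·g_{z,π_{k−1}}(λ)⋯g_{z,π_1}(λ) = I + Σ_{j=1}^k ((z − conj(z))/(λ − z))^j · P_{k,j}. -/

import Mathlib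

open Matrix Complex Filter

noncomputable section

/-- A Hermitian projection of ℂⁿ: a matrix with π* = π and π² = π. -/
def IsHermitianProj {n : ℕ} (π : Matrix (Fin n) (Fin n) ℂ) : Prop :=
  πᴴ = π ∧ π * π = π

/-- The simple element g_{z,π}(λ) = I + ((z - conj z)/(λ - z))·(I - π). -/
def simpleElt {n : ℕ} (z : ℂ) (π : Matrix (Fin n) (Fin n) ℂ) (lam : ℂ) :
    Matrix (Fin n) (Fin n) ℂ :=
  1 + ((z - (starRingEnd ℂ) z) / (lam - z)) • (1 - π)

/-- The range of the linear map ℂⁿ → ℂⁿ defined by a matrix. -/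
def mrange {n m : ℕ} (A : Matrix (Fin n) (Fin m) ℂ) :
    Submodule ℂ (EuclideanSpace ℂ (Fin n)) :=
  LinearMap.range (Matrix.toEuclideanLin A)


section AuxStatement9

variable {α : Type*} [LinearOrder α] {M : Type*} [Ring M]

lemma aux_expand9 (r : α → M) (s : Finset α) :
    ((s.sort (· ≤ ·)).reverse.map (fun i => 1 + r i)).prod
      = ∑ t ∈ s.powerset, ((t.sort (· ≤ ·)).reverse.map r).prod := by
  classical
  induction s using Finset.induction_on_min with
  | empty => simp
  | insert a s ha ih =>
    have ha' : a ∉ s := fun h => lt_irrefl a (ha a h)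
    rw [Finset.sort_insert _ (fun b hb => (ha b hb).le) ha']
    rw [Finset.sum_powerset_insert ha']
    have key : ∀ t ∈ s.powerset,
        (((insert a t).sort (· ≤ ·)).reverse.map r).prod
          = ((t.sort (· ≤ ·)).reverse.map r).prod * r a := by
      intro t ht
      rw [Finset.mem_powerset] at ht
      have hat : a ∉ t := fun h => lt_irrefl a (ha a (ht h))
      rw [Finset.sort_insert _ (fun b hb => (ha b (ht hb)).le) hat]
      simp [List.prod_append]
    rw [Finset.sum_congr rfl key, ← Finset.sum_mul, ← ih]
    simp [List.prod_append, mul_add]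

omit [LinearOrder α] in
lemma smul_map_prod9 {R : Type*} [CommSemiring R] {N : Type*} [Semiring N] [Algebra R N]
    (c : R) (q : α → N) (l : List α) :
    (l.map (fun i => c • q i)).prod = c ^ l.length • (l.map q).prod := by
  induction l with
  | nil => simp
  | cons a l ih =>
    simp only [List.map_cons, List.prod_cons, ih, List.length_cons]
    rw [smul_mul_smul_comm, pow_succ']

end AuxStatement9

/-- Laurent expansion of a product of simple elements with the same pole:
g_{z,π_k}⋯g_{z,π_1} = I + Σ_{j=1}^k ((z − conj z)/(λ − z))^j P_{k,j}, where
P_{k,j} = Σ_{k ≥ i₁ > ⋯ > i_j ≥ 1} π_{i₁}^⊥ ⋯ π_{i_j}^⊥ (the product taken with strictly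
decreasing indices, i.e. over subsets of cardinality j listed in decreasing order). -/
theorem statement9 {n k : ℕ} (hn : 1 ≤ n) (z : ℂ) (hz : z.im ≠ 0)
    (π : Fin k → Matrix (Fin n) (Fin n) ℂ)
    (hπ : ∀ i, IsHermitianProj (π i))
    (lam : ℂ) (hlam : lam ≠ z) :
    (List.ofFn fun i : Fin k => simpleElt z (π i) lam).reverse.prod
      = 1 + ∑ j ∈ Finset.Icc 1 k,
          ((z - (starRingEnd ℂ) z) / (lam - z)) ^ j •
            ∑ s ∈ Finset.univ.filter (fun s : Finset (Fin k) => s.card = j),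
              ((s.sort (· ≤ ·)).reverse.map
                fun i => (1 : Matrix (Fin n) (Fin n) ℂ) - π i).prod := by
  classical
  set c : ℂ := (z - (starRingEnd ℂ) z) / (lam - z) with hc
  have h1 : (List.ofFn fun i : Fin k => simpleElt z (π i) lam)
      = ((Finset.univ.sort (· ≤ ·)).map
          (fun i => 1 + c • ((1 : Matrix (Fin n) (Fin n) ℂ) - π i))) := by
    rw [Fin.sort_univ, List.ofFn_eq_map]
    rfl
  rw [h1, ← List.map_reverse, aux_expand9, Finset.powerset_univ]
  have h2 : ∀ t : Finset (Fin k),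
      ((t.sort (· ≤ ·)).reverse.map (fun i => c • ((1 : Matrix (Fin n) (Fin n) ℂ) - π i))).prod
        = c ^ t.card • ((t.sort (· ≤ ·)).reverse.map
            (fun i => (1 : Matrix (Fin n) (Fin n) ℂ) - π i)).prod := by
    intro t
    rw [smul_map_prod9]
    simp
  rw [Finset.sum_congr rfl (fun t _ => h2 t)]
  have hmaps : ∀ t : Finset (Fin k), t ∈ (Finset.univ : Finset (Finset (Fin k))) →
      t.card ∈ Finset.Icc 0 k := by
    intro t _
    simp only [Finset.mem_Icc]
    exact ⟨Nat.zero_le _, (Finset.card_le_univ t).trans_eq (by simp)⟩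
  rw [← Finset.sum_fiberwise_of_maps_to hmaps]
  have h3 : ∀ j ∈ Finset.Icc 0 k,
      (∑ t ∈ Finset.univ.filter (fun t : Finset (Fin k) => t.card = j),
        c ^ t.card • ((t.sort (· ≤ ·)).reverse.map
          (fun i => (1 : Matrix (Fin n) (Fin n) ℂ) - π i)).prod)
        = c ^ j • ∑ t ∈ Finset.univ.filter (fun t : Finset (Fin k) => t.card = j),
            ((t.sort (· ≤ ·)).reverse.map
              (fun i => (1 : Matrix (Fin n) (Fin n) ℂ) - π i)).prod := by
    intro j _
    rw [Finset.smul_sum]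
    refine Finset.sum_congr rfl fun t ht => ?_
    rw [(Finset.mem_filter.mp ht).2]
  rw [Finset.sum_congr rfl h3]
  have h4 : Finset.Icc 0 k = insert 0 (Finset.Icc 1 k) := by
    ext x; simp only [Finset.mem_Icc, Finset.mem_insert]; omega
  rw [h4, Finset.sum_insert (by simp)]
  have h5 : (Finset.univ.filter (fun t : Finset (Fin k) => t.card = 0)) = {∅} := by
    ext t; simp [Finset.card_eq_zero]
  rw [h5]
  simp
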